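/- Let (X, ρ) be a finite distance space that is strongly d-embeddable for an integer d ≥ 1. Then every independent subset of X has size at most d + 1, and there exists an independent subset of X of size exactly d + 1. -/

import Mathlib

open Finset Module

/-- Pad a Euclidean space with zeros to embed into a higher-dimensional one. -/
noncomputable def padLI {m n : ℕ} (h : m ≤ n) :
    EuclideanSpace ℝ (Fin m) →ₗᵢ[ℝ] EuclideanSpace ℝ (Fin n) where
  toLinearMap :=
    { toFun := fun x => WithLp.toLp 2 (fun j => if h' : (j : ℕ) < m then x ⟨j, h'⟩ else 0)
      map_add' := by
        intro x y; ext j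
        by_cases h' : (j : ℕ) < m <;> simp [h']
      map_smul' := by
        intro c x; ext j
        by_cases h' : (j : ℕ) < m <;> simp [h'] }
  norm_map' := by
    intro x
    rw [EuclideanSpace.norm_eq, EuclideanSpace.norm_eq]
    congr 1
    set f : ℕ → ℝ := fun j => if h' : j < m then ‖x ⟨j, h'⟩‖ ^ 2 else 0 with hf
    have hL : ∀ j : Fin n,
        ‖(if h' : (j : ℕ) < m then x ⟨j, h'⟩ else 0)‖ ^ 2 = f (j : ℕ) := by
      intro j
      by_cases h' : (j : ℕ) < m <;> simp [hf, h']
    calc ∑ j : Fin n, ‖(if h' : (j : ℕ) < m then x ⟨j, h'⟩ else 0)‖ ^ 2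
        = ∑ j : Fin n, f (j : ℕ) := Finset.sum_congr rfl fun j _ => hL j
      _ = ∑ j ∈ Finset.range n, f j := Fin.sum_univ_eq_sum_range f n
      _ = ∑ j ∈ Finset.range m, f j := by
          refine (Finset.sum_subset (Finset.range_subset_range.mpr h) ?_).symm
          intro j _ hj
          rw [Finset.mem_range, not_lt] at hj
          exact dif_neg (by omega)
      _ = ∑ j : Fin m, f (j : ℕ) := (Fin.sum_univ_eq_sum_range f m).symm
      _ = ∑ j : Fin m, ‖x j‖ ^ 2 := by
          refine Finset.sum_congr rfl fun j _ => ?_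
          simp [hf, j.isLt]


/-- `(X, ρ)` is a distance space: `ρ` is symmetric, nonnegative and vanishes on the
diagonal on the points of `X`. -/
def IsDistance {α : Type*} (X : Finset α) (ρ : α → α → ℝ) : Prop :=
  (∀ x ∈ X, ∀ y ∈ X, ρ x y = ρ y x) ∧ (∀ x ∈ X, ∀ y ∈ X, 0 ≤ ρ x y) ∧ (∀ x ∈ X, ρ x x = 0)

/-- `(X, ρ)` is isometrically embeddable into `ℝ^d`. -/
def IsEmbeddable {α : Type*} (X : Finset α) (ρ : α → α → ℝ) (d : ℕ) : Prop :=
  ∃ φ : α → EuclideanSpace ℝ (Fin d), ∀ x ∈ X, ∀ y ∈ X, ρ x y = dist (φ x) (φ y)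

/-- `(X, ρ)` is strongly `d`-embeddable: `d`-embeddable but (for `d ≥ 1`)
not `(d-1)`-embeddable. -/
def IsStronglyEmbeddable {α : Type*} (X : Finset α) (ρ : α → α → ℝ) (d : ℕ) : Prop :=
  IsEmbeddable X ρ d ∧ (0 < d → ¬ IsEmbeddable X ρ (d - 1))

/-- A nonempty set `Y` with `|Y| = r + 1` is independent if `(Y, ρ)` is strongly
`r`-embeddable. -/
def IsIndependent {α : Type*} (Y : Finset α) (ρ : α → α → ℝ) : Prop :=
  Y.Nonempty ∧ IsStronglyEmbeddable Y ρ (Y.card - 1)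

lemma embeddable_mono {α : Type*} {X : Finset α} {ρ : α → α → ℝ} {d e : ℕ} (h : d ≤ e)
    (hE : IsEmbeddable X ρ d) : IsEmbeddable X ρ e := by
  obtain ⟨φ, hφ⟩ := hE
  refine ⟨fun x => padLI h (φ x), fun x hx y hy => ?_⟩
  rw [hφ x hx y hy, dist_eq_norm, dist_eq_norm, ← (padLI h).map_sub, (padLI h).norm_map]

lemma embeddable_subset {α : Type*} {X Y : Finset α} {ρ : α → α → ℝ} {d : ℕ} (h : Y ⊆ X)
    (hE : IsEmbeddable X ρ d) : IsEmbeddable Y ρ d := by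
  obtain ⟨φ, hφ⟩ := hE
  exact ⟨φ, fun x hx y hy => hφ x (h hx) y (h hy)⟩

/-- If two families have the same Gram matrix and one is linearly independent,
so is the other. -/
lemma linearIndependent_of_gram_eq {E F : Type*} [NormedAddCommGroup E]
    [InnerProductSpace ℝ E] [NormedAddCommGroup F] [InnerProductSpace ℝ F]
    {ι : Type*} [Fintype ι] {u : ι → E} {w : ι → F}
    (hgram : ∀ i j, (inner ℝ (u i) (u j) : ℝ) = inner ℝ (w i) (w j))
    (hu : LinearIndependent ℝ u) : LinearIndependent ℝ w := by
  rw [Fintype.linearIndependent_iff] at hu ⊢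
  intro c hc i
  have hkey : (inner ℝ (∑ i, c i • u i) (∑ j, c j • u j) : ℝ)
      = inner ℝ (∑ i, c i • w i) (∑ j, c j • w j) := by
    simp only [inner_sum, sum_inner, real_inner_smul_left, real_inner_smul_right, hgram]
  rw [hc, inner_zero_right] at hkey
  have h0 : ∑ i, c i • u i = 0 := by
    rwa [← inner_self_eq_zero (𝕜 := ℝ)]
  exact hu c h0 i


/-- in a strongly `d`-embeddable finite distance space, every independent
set has size at most `d + 1`, and some independent set has size exactly `d + 1`. -/
theorem stmt6 {α : Type*} (X : Finset α) (ρ : α → α → ℝ) (hD : IsDistance X ρ)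
    (d : ℕ) (hd : 1 ≤ d) (hX : IsStronglyEmbeddable X ρ d) :
    (∀ Y ⊆ X, IsIndependent Y ρ → Y.card ≤ d + 1) ∧
      (∃ Y ⊆ X, IsIndependent Y ρ ∧ Y.card = d + 1) := by
  classical
  obtain ⟨⟨φ, hφ⟩, hnot⟩ := hX
  constructor
  · -- every independent set has card ≤ d + 1
    intro Y hYX ⟨hYne, hYemb, hYnot⟩
    by_contra hlt
    push_neg at hlt
    have h1 : 0 < Y.card - 1 := by omega
    refine hYnot h1 (embeddable_mono (by omega) (embeddable_subset hYX ⟨φ, hφ⟩))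
  · -- existence
    -- X is nonempty
    have hXne : X.Nonempty := by
      by_contra hne
      rw [Finset.not_nonempty_iff_eq_empty] at hne
      exact hnot hd ⟨fun _ => 0, by simp [hne]⟩
    obtain ⟨x₀, hx₀⟩ := hXne
    set S : Set (EuclideanSpace ℝ (Fin d)) := (fun x => φ x - φ x₀) '' (X : Set α) with hS
    -- the span of S is everything
    have hspanS : Submodule.span ℝ S = ⊤ := by
      by_contra htop
      have hlt' : Submodule.span ℝ S < ⊤ := lt_top_iff_ne_top.mpr htop
      have hfr : finrank ℝ (Submodule.span ℝ S) < d := by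
        have := Submodule.finrank_lt (K := ℝ) htop
        rwa [finrank_euclideanSpace_fin] at this
      set V := Submodule.span ℝ S
      have hmem : ∀ x ∈ X, φ x - φ x₀ ∈ V := fun x hx =>
        Submodule.subset_span ⟨x, hx, rfl⟩
      -- build an embedding into ℝ^(d-1)
      refine hnot hd ?_
      set m := finrank ℝ V with hm
      have hmle : m ≤ d - 1 := by omega
      set B := stdOrthonormalBasis ℝ V
      set ψ : α → EuclideanSpace ℝ (Fin (d - 1)) := fun x =>
        if hx : x ∈ X then padLI hmle (B.repr ⟨φ x - φ x₀, hmem x hx⟩) else 0 with hψ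
      refine ⟨ψ, fun x hx y hy => ?_⟩
      rw [hφ x hx y hy, hψ]
      simp only [dif_pos hx, dif_pos hy]
      rw [dist_eq_norm, dist_eq_norm, ← (padLI hmle).map_sub, (padLI hmle).norm_map,
        ← B.repr.map_sub, B.repr.norm_map]
      have hmem2 : φ x - φ y ∈ V := by
        have h' : φ x - φ y = (φ x - φ x₀) - (φ y - φ x₀) := by abel
        rw [h']; exact sub_mem (hmem x hx) (hmem y hy)
      have heq : (⟨φ x - φ x₀, hmem x hx⟩ - ⟨φ y - φ x₀, hmem y hy⟩ : V)
          = ⟨φ x - φ y, hmem2⟩ := by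
        ext
        simp [sub_sub_sub_cancel_right]
      rw [heq]
      rfl
    -- pick a linearly independent spanning subset
    obtain ⟨t, hts, hspant, hindep⟩ := exists_linearIndependent ℝ S
    have htfin : t.Finite := hindep.setFinite
    haveI : Fintype t := htfin.fintype
    have hb : Submodule.span ℝ t = ⊤ := by rw [hspant, hspanS]
    let b : Basis t ℝ (EuclideanSpace ℝ (Fin d)) :=
      Basis.mk hindep (by rw [Subtype.range_coe, hb])
    have hcard : Fintype.card t = d := by
      have := Module.finrank_eq_card_basis b
      rw [finrank_euclideanSpace_fin] at this
      exact this.symm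
    -- choose preimages
    have hchoice : ∀ v : t, ∃ x, x ∈ X ∧ φ x - φ x₀ = (v : EuclideanSpace ℝ (Fin d)) := by
      intro v
      obtain ⟨x, hx, hxe⟩ := hts v.2
      exact ⟨x, hx, hxe⟩
    choose g hgX hgφ using hchoice
    have hne0 : ∀ v : t, (v : EuclideanSpace ℝ (Fin d)) ≠ 0 := fun v =>
      hindep.ne_zero v
    have hgne : ∀ v : t, g v ≠ x₀ := by
      intro v hv
      apply hne0 v
      rw [← hgφ v, hv, sub_self]
    have hginj : Function.Injective g := by
      intro v w hvw
      have : (v : EuclideanSpace ℝ (Fin d)) = w := by rw [← hgφ v, ← hgφ w, hvw]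
      exact Subtype.ext this
    classical
    set Y : Finset α := insert x₀ (Finset.univ.image g) with hY
    have hx₀Y : x₀ ∈ Y := Finset.mem_insert_self _ _
    have hgY : ∀ v : t, g v ∈ Y := fun v =>
      Finset.mem_insert_of_mem (Finset.mem_image.mpr ⟨v, Finset.mem_univ v, rfl⟩)
    have hYX : Y ⊆ X := by
      intro y hy
      rcases Finset.mem_insert.mp hy with h | h
      · rwa [h]
      · obtain ⟨v, _, rfl⟩ := Finset.mem_image.mp h
        exact hgX v
    have hYcard : Y.card = d + 1 := by
      rw [hY, Finset.card_insert_of_notMem, Finset.card_image_of_injective _ hginj,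
        Finset.card_univ, hcard]
      intro hmem'
      obtain ⟨v, _, hv⟩ := Finset.mem_image.mp hmem'
      exact hgne v hv
    refine ⟨Y, hYX, ⟨⟨x₀, hx₀Y⟩, ?_, ?_⟩, hYcard⟩
    · -- Y is d-embeddable
      rw [hYcard]
      simp only [Nat.add_sub_cancel]
      exact embeddable_subset hYX ⟨φ, hφ⟩
    · -- Y is not (d-1)-embeddable
      rw [hYcard]
      simp only [Nat.add_sub_cancel]
      intro _ ⟨ψ, hψ⟩
      -- the Gram trick
      set u : t → EuclideanSpace ℝ (Fin d) := fun v => φ (g v) - φ x₀ with hu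
      set w : t → EuclideanSpace ℝ (Fin (d - 1)) := fun v => ψ (g v) - ψ x₀ with hw
      have hudef : ∀ v : t, u v = (v : EuclideanSpace ℝ (Fin d)) := fun v => hgφ v
      have huind : LinearIndependent ℝ u := by
        have : u = fun v : t => (v : EuclideanSpace ℝ (Fin d)) := funext hudef
        rw [this]
        exact hindep
      have hnorm : ∀ y ∈ Y, ∀ z ∈ Y, ‖φ y - φ z‖ = ‖ψ y - ψ z‖ := by
        intro y hy z hz
        rw [← dist_eq_norm, ← dist_eq_norm, ← hφ y (hYX hy) z (hYX hz), hψ y hy z hz]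
      have hgram : ∀ v v' : t, (inner ℝ (u v) (u v') : ℝ) = inner ℝ (w v) (w v') := by
        intro v v'
        rw [hu, hw]
        simp only
        rw [real_inner_eq_norm_mul_self_add_norm_mul_self_sub_norm_sub_mul_self_div_two,
          real_inner_eq_norm_mul_self_add_norm_mul_self_sub_norm_sub_mul_self_div_two]
        rw [sub_sub_sub_cancel_right, sub_sub_sub_cancel_right]
        rw [hnorm _ (hgY v) _ hx₀Y, hnorm _ (hgY v') _ hx₀Y, hnorm _ (hgY v) _ (hgY v')]
      have hwind : LinearIndependent ℝ w := linearIndependent_of_gram_eq hgram huind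
      have hle := hwind.fintype_card_le_finrank
      rw [finrank_euclideanSpace_fin, hcard] at hle
      omega
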